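/- Let B ⊂ End(V) be a (possibly non-unital) subalgebra of endomorphisms of a finite-dimensional complex vector space V, closed under multiplication, such that Tr(b) = 0 for all b ∈ B and Tr(b₁b₂···b_k) = 0 for all products of elements of B. Then every element of B is nilpotent, and B is simultaneously strictly upper triangularizable. -/

import Mathlib

open Module LinearMap Set

lemma aux_trace_pow_restrict {V : Type*} [AddCommGroup V] [Module ℂ V] [FiniteDimensional ℂ V]
    (f : Module.End ℂ V) (μ : ℂ) (k : ℕ)
    (h : Set.MapsTo (f ^ k) (f.maxGenEigenspace μ) (f.maxGenEigenspace μ)) :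
    LinearMap.trace ℂ _ ((f ^ k).restrict h)
      = (finrank ℂ (f.maxGenEigenspace μ)) * μ ^ k := by
  have h1 : Set.MapsTo f (f.maxGenEigenspace μ) (f.maxGenEigenspace μ) :=
    Module.End.mapsTo_maxGenEigenspace_of_comm (Commute.refl f) μ
  have hres : (f ^ k).restrict h = (f.restrict h1) ^ k := by
    exact (Module.End.pow_restrict (p := f.maxGenEigenspace μ) k h1 h).symm
  have hmN : Set.MapsTo (f - algebraMap ℂ (Module.End ℂ V) μ)
      (f.maxGenEigenspace μ) (f.maxGenEigenspace μ) :=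
    Module.End.mapsTo_maxGenEigenspace_of_comm (Algebra.mul_sub_algebraMap_commutes f μ) μ
  set N := (f - algebraMap ℂ (Module.End ℂ V) μ).restrict hmN with hNdef
  have hfr : f.restrict h1 = algebraMap ℂ (Module.End ℂ (f.maxGenEigenspace μ)) μ + N := by
    ext x
    simp [hNdef, LinearMap.restrict_apply, Module.algebraMap_end_apply, LinearMap.sub_apply]
    change f x = μ • (x : V) + (f - algebraMap ℂ (Module.End ℂ V) μ) x
    simp [Module.algebraMap_end_apply]
  have hNnil : IsNilpotent N := f.isNilpotent_restrict_maxGenEigenspace_sub_algebraMap μ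
  have hcomm : Commute (algebraMap ℂ (Module.End ℂ (f.maxGenEigenspace μ)) μ) N :=
    Algebra.commutes μ N
  rw [hres, hfr, Commute.add_pow hcomm, map_sum]
  rw [Finset.sum_eq_single_of_mem k (Finset.self_mem_range_succ k)]
  · simp [Algebra.algebraMap_eq_smul_one, smul_pow, trace_one]
    ring
  · intro i hi hik
    have hki : 1 ≤ k - i := by
      have : i < k := lt_of_le_of_ne (Nat.lt_succ_iff.mp (Finset.mem_range.mp hi)) hik
      omega
    have hnp : IsNilpotent (N ^ (k - i)) := hNnil.pow_of_pos (by omega)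
    have h0 : LinearMap.trace ℂ _ (N ^ (k - i)) = 0 :=
      (LinearMap.isNilpotent_trace_of_isNilpotent hnp).eq_zero
    rw [← map_pow, Algebra.algebraMap_eq_smul_one, smul_mul_assoc, one_mul, smul_mul_assoc, map_smul,
      ← (Nat.cast_commute (k.choose i) (N ^ (k - i))).eq, ← nsmul_eq_mul,
      map_nsmul, h0, smul_zero, smul_zero]

lemma aux_nilpotent_of_trace_pow {V : Type*} [AddCommGroup V] [Module ℂ V] [FiniteDimensional ℂ V]
    (f : Module.End ℂ V) (h : ∀ k : ℕ, 1 ≤ k → LinearMap.trace ℂ V (f ^ k) = 0) :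
    IsNilpotent f := by
  classical
  have hind := f.independent_maxGenEigenspace
  have hsup := f.iSup_maxGenEigenspace_eq_top
  have hds : DirectSum.IsInternal (fun μ : ℂ => f.maxGenEigenspace μ) :=
    DirectSum.isInternal_submodule_of_iSupIndep_of_iSup_eq_top hind hsup
  have hfin : {μ : ℂ | f.maxGenEigenspace μ ≠ ⊥}.Finite :=
    WellFoundedGT.finite_ne_bot_of_iSupIndep hind
  have hmaps : ∀ (k : ℕ) (μ : ℂ),
      Set.MapsTo (f ^ k) (f.maxGenEigenspace μ) (f.maxGenEigenspace μ) := fun k μ =>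
    Module.End.mapsTo_maxGenEigenspace_of_comm ((Commute.refl f).pow_right k) μ
  have key : ∀ k : ℕ, 1 ≤ k →
      ∑ μ ∈ hfin.toFinset, (finrank ℂ (f.maxGenEigenspace μ) : ℂ) * μ ^ k = 0 := by
    intro k hk
    rw [← h k hk, LinearMap.trace_eq_sum_trace_restrict' hds hfin (hmaps k)]
    exact Finset.sum_congr rfl fun μ _ => (aux_trace_pow_restrict f μ k (hmaps k μ)).symm
  -- the nonzero eigenvalues
  set t : Finset ℂ := hfin.toFinset.filter (· ≠ 0) with ht
  have key' : ∀ k : ℕ, 1 ≤ k → ∑ μ ∈ t, (finrank ℂ (f.maxGenEigenspace μ) : ℂ) * μ ^ k = 0 := by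
    intro k hk
    rw [← key k hk]
    refine Finset.sum_filter_of_ne (p := fun x => x ≠ 0) fun μ _ hne => ?_
    rintro rfl
    simp [zero_pow (by omega : k ≠ 0)] at hne
  have htempty : t = ∅ := by
    by_contra hne
    set r := t.card with hr
    have e : Fin r ≃ {x // x ∈ t} := t.equivFin.symm
    set μs : Fin r → ℂ := fun i => (e i : ℂ) with hμs
    have hμinj : Function.Injective μs := fun i j hij => by
      apply e.injective; exact Subtype.ext hij
    have hμne : ∀ i, μs i ≠ 0 := fun i => by
      have h2 : (e i : ℂ) ∈ Finset.filter (fun x => x ≠ 0) hfin.toFinset := by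
        rw [← ht]; exact (e i).2
      exact (Finset.mem_filter.mp h2).2
    set A : Matrix (Fin r) (Fin r) ℂ := fun k i => μs i ^ ((k : ℕ) + 1) with hA
    set dv : Fin r → ℂ := fun i => (finrank ℂ (f.maxGenEigenspace (μs i)) : ℂ) with hdv
    have hAv : A.mulVec dv = 0 := by
      funext k
      have h3 : ∑ i : {x // x ∈ t}, (finrank ℂ (f.maxGenEigenspace (i : ℂ)) : ℂ) * (i : ℂ) ^ ((k : ℕ) + 1) = 0 := by
        rw [Finset.sum_coe_sort t (fun μ => (finrank ℂ (f.maxGenEigenspace μ) : ℂ) * μ ^ ((k : ℕ) + 1))]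
        exact key' _ (by omega)
      rw [← e.sum_comp _] at h3
      simp only [Matrix.mulVec, dotProduct, Pi.zero_apply, hA, hdv]
      rw [← h3]
      exact Finset.sum_congr rfl fun i _ => mul_comm _ _
    have hdet : A.det ≠ 0 := by
      have h1 : A.det = (Matrix.of fun (i k : Fin r) => μs i * Matrix.vandermonde μs i k).det := by
        rw [← Matrix.det_transpose (Matrix.of fun (i k : Fin r) => μs i * Matrix.vandermonde μs i k)]
        congr 1
        ext k i
        simp only [hA, Matrix.transpose_apply, Matrix.of_apply, Matrix.vandermonde_apply]
        rw [pow_succ']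
      rw [h1, Matrix.det_mul_column]
      refine mul_ne_zero (Finset.prod_ne_zero_iff.mpr fun i _ => hμne i) ?_
      rw [Matrix.det_vandermonde]
      refine Finset.prod_ne_zero_iff.mpr fun i _ => Finset.prod_ne_zero_iff.mpr fun j hj => ?_
      exact sub_ne_zero_of_ne fun hEq => (Finset.mem_Ioi.mp hj).ne' (hμinj hEq)
    have hdv0 : dv = 0 := by
      have hA : IsUnit A := (Matrix.isUnit_iff_isUnit_det A).mpr (Ne.isUnit hdet)
      calc dv = (1 : Matrix (Fin r) (Fin r) ℂ).mulVec dv := by simp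
        _ = (A⁻¹ * A).mulVec dv := by rw [Matrix.nonsing_inv_mul A (Ne.isUnit hdet)]
        _ = A⁻¹.mulVec (A.mulVec dv) := by rw [← Matrix.mulVec_mulVec]
        _ = 0 := by rw [hAv, Matrix.mulVec_zero]
    obtain ⟨μ, hμ⟩ := Finset.nonempty_iff_ne_empty.mpr hne
    have hi : finrank ℂ (f.maxGenEigenspace μ) = 0 := by
      have h5 : μs (e.symm ⟨μ, hμ⟩) = μ := by rw [hμs]; simp
      have h4 := congrFun hdv0 (e.symm ⟨μ, hμ⟩)
      rw [hdv] at h4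
      simp only [Pi.zero_apply] at h4
      rw [← h5]
      exact_mod_cast h4
    have : f.maxGenEigenspace μ ≠ ⊥ := by
      have := Finset.mem_filter.mp (ht ▸ hμ)
      simpa using this.1
    have : 0 < finrank ℂ (f.maxGenEigenspace μ) := by
      rw [Submodule.ne_bot_iff] at this
      obtain ⟨x, hx, hx0⟩ := this
      have : Nontrivial (f.maxGenEigenspace μ) := ⟨⟨⟨x, hx⟩, 0, by simpa using hx0⟩⟩
      exact finrank_pos
    omega
  -- conclude all of V is the 0 generalized eigenspace
  have htop : f.maxGenEigenspace 0 = ⊤ := by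
    rw [← hsup]
    refine le_antisymm (le_iSup _ 0) (iSup_le fun μ => ?_)
    by_cases hμ : μ = 0
    · subst hμ; exact le_rfl
    · have : f.maxGenEigenspace μ = ⊥ := by
        by_contra hbot
        have : μ ∈ t := by
          rw [ht, Finset.mem_filter]
          exact ⟨hfin.mem_toFinset.mpr hbot, hμ⟩
        simp [htempty] at this
      simp [this]
  rw [LinearMap.isNilpotent_iff_charpoly, LinearMap.charpoly_eq_X_pow_iff]
  intro m
  have hm : m ∈ f.maxGenEigenspace 0 := htop ▸ Submodule.mem_top
  rw [Module.End.mem_maxGenEigenspace] at hm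
  obtain ⟨k, hk⟩ := hm
  exact ⟨k, by simpa using hk⟩

attribute [local instance] LieRing.ofAssociativeRing

lemma aux_common_kernel {V : Type*} [AddCommGroup V] [Module ℂ V] [FiniteDimensional ℂ V]
    [Nontrivial V] (B : NonUnitalSubalgebra ℂ (Module.End ℂ V))
    (hnil : ∀ x ∈ B, IsNilpotent x) :
    ∃ v : V, v ≠ 0 ∧ ∀ x ∈ B, x v = 0 := by
  let L : LieSubalgebra ℂ (Module.End ℂ V) :=
    { toSubmodule := B.toSubmodule
      lie_mem' := fun {x y} hx hy => by
        have hx' : x ∈ B := hx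
        have hy' : y ∈ B := hy
        show ⁅x, y⁆ ∈ B.toSubmodule
        rw [Ring.lie_def]
        exact sub_mem (B.mul_mem hx' hy') (B.mul_mem hy' hx')}
  have hnilL : ∀ x : L, IsNilpotent (LieModule.toEnd ℂ L V x) := by
    intro x
    obtain ⟨n, hn⟩ := hnil x.1 x.2
    refine ⟨n, ?_⟩
    ext m
    have : ∀ m : V, (LieModule.toEnd ℂ L V x) m = x.1 m := fun m => rfl
    have hpow : ∀ (k : ℕ) (m : V), ((LieModule.toEnd ℂ L V x) ^ k) m = (x.1 ^ k) m := by
      intro k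
      induction k with
      | zero => intro m; rfl
      | succ k ih =>
        intro m
        rw [pow_succ, pow_succ]
        simp only [Module.End.mul_apply]
        rw [this, ih]
    rw [LinearMap.zero_apply, hpow, hn, LinearMap.zero_apply]
  have hML : LieModule.IsNilpotent L V :=
    LieAlgebra.isEngelian_of_isNoetherian V hnilL
  obtain ⟨⟨v, hv⟩, ⟨w, hw⟩, hvw⟩ :=
    LieModule.nontrivial_max_triv_of_isNilpotent ℂ L V
  refine ⟨v - w, fun h => hvw (Subtype.ext (sub_eq_zero.mp h)), fun x hx => ?_⟩
  have hmem : v - w ∈ LieModule.maxTrivSubmodule ℂ L V := sub_mem hv hw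
  exact (LieModule.mem_maxTrivSubmodule ℂ L V (v - w)).mp hmem ⟨x, hx⟩

universe u

lemma aux_flag : ∀ (n : ℕ) (V : Type u) [AddCommGroup V] [Module ℂ V] [FiniteDimensional ℂ V]
    (_ : finrank ℂ V = n) (B : NonUnitalSubalgebra ℂ (Module.End ℂ V))
    (_ : ∀ x ∈ B, IsNilpotent x),
    ∃ b : Basis (Fin n) ℂ V, ∀ x ∈ B, ∀ j, x (b j) ∈ Submodule.span ℂ (b '' {i | i < j}) := by
  intro n
  induction n with
  | zero =>
    intro V _ _ _ hn B hnil
    haveI : Subsingleton V := finrank_zero_iff.mp hn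
    exact ⟨Basis.empty V, fun x hx j => j.elim0⟩
  | succ n ih =>
    intro V _ _ _ hn B hnil
    haveI : Nontrivial V := by
      rw [← finrank_pos_iff (R := ℂ)]
      omega
    obtain ⟨v, hv0, hvB⟩ := aux_common_kernel B hnil
    set W : Submodule ℂ V := ℂ ∙ v with hW
    have hWx : ∀ x ∈ B, ∀ w ∈ W, x w = 0 := by
      intro x hx w hw
      obtain ⟨a, rfl⟩ := Submodule.mem_span_singleton.mp hw
      rw [map_smul, hvB x hx, smul_zero]
    have hWle : ∀ x ∈ B, W ≤ W.comap x := fun x hx w hw => by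
      rw [Submodule.mem_comap, hWx x hx w hw]; exact zero_mem W
    have hQrank : finrank ℂ (V ⧸ W) = n := by
      have h1 : finrank ℂ W = 1 := finrank_span_singleton hv0
      have h2 := Submodule.finrank_quotient_add_finrank W
      omega
    set B' : NonUnitalSubalgebra ℂ (Module.End ℂ (V ⧸ W)) :=
      { carrier := {g | ∃ x ∈ B, g ∘ₗ W.mkQ = W.mkQ ∘ₗ x}
        add_mem' := by
          rintro g g' ⟨x, hx, hgx⟩ ⟨y, hy, hgy⟩
          exact ⟨x + y, add_mem hx hy, by rw [LinearMap.add_comp, LinearMap.comp_add, hgx, hgy]⟩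
        zero_mem' := ⟨0, zero_mem B, by rw [LinearMap.zero_comp, LinearMap.comp_zero]⟩
        smul_mem' := by
          rintro c g ⟨x, hx, hgx⟩
          exact ⟨c • x, SMulMemClass.smul_mem c hx,
            by rw [LinearMap.smul_comp, LinearMap.comp_smul, hgx]⟩
        mul_mem' := by
          rintro g g' ⟨x, hx, hgx⟩ ⟨y, hy, hgy⟩
          refine ⟨x * y, mul_mem hx hy, ?_⟩
          rw [Module.End.mul_eq_comp, Module.End.mul_eq_comp,
            LinearMap.comp_assoc, hgy, ← LinearMap.comp_assoc, hgx, LinearMap.comp_assoc] }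
      with hB'
    have hnil' : ∀ g ∈ B', IsNilpotent g := by
      rintro g ⟨x, hx, hgx⟩
      obtain ⟨m, hm⟩ := hnil x hx
      have hcomp : ∀ k : ℕ, (g ^ k) ∘ₗ W.mkQ = W.mkQ ∘ₗ (x ^ k) := by
        intro k
        induction k with
        | zero => simp [Module.End.one_eq_id]
        | succ k ihk =>
          rw [pow_succ, pow_succ, Module.End.mul_eq_comp, Module.End.mul_eq_comp,
            LinearMap.comp_assoc, hgx, ← LinearMap.comp_assoc, ihk, LinearMap.comp_assoc]
      refine ⟨m, ?_⟩
      have h4 : (g ^ m) ∘ₗ W.mkQ = 0 := by rw [hcomp m, hm, LinearMap.comp_zero]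
      ext q
      have h5 := congrArg (fun f : V →ₗ[ℂ] V ⧸ W => f q) h4
      simpa using h5
    obtain ⟨c, hc⟩ := ih (V ⧸ W) hQrank B' hnil'
    have hsur := W.mkQ_surjective
    set u : Fin n → V := fun i => (hsur (c i)).choose with hudef
    have hu : ∀ i, W.mkQ (u i) = c i := fun i => (hsur (c i)).choose_spec
    have huc : W.mkQ ∘ u = c := funext hu
    have hindep : LinearIndependent ℂ (Fin.cons v u : Fin (n + 1) → V) := by
      rw [linearIndependent_fin_cons]
      constructor
      · exact LinearIndependent.of_comp W.mkQ (by rw [show (W.mkQ ∘ u : Fin n → V ⧸ W) = c from huc]; exact c.linearIndependent)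
      · intro hmem
        rw [Submodule.mem_span_range_iff_exists_fun] at hmem
        obtain ⟨a, ha⟩ := hmem
        have h0 : W.mkQ v = 0 := (Submodule.Quotient.mk_eq_zero W).mpr
          (Submodule.mem_span_singleton_self v)
        have h1 : ∑ i, a i • c i = 0 := by
          rw [← h0, ← ha, map_sum]
          exact Finset.sum_congr rfl fun i _ => by rw [map_smul, hu i]
        have h2 : ∀ i, a i = 0 :=
          Fintype.linearIndependent_iff.mp c.linearIndependent a h1
        apply hv0
        rw [← ha]
        simp [h2]
    have hcard : Fintype.card (Fin (n + 1)) = finrank ℂ V := by simp [hn]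
    set b : Basis (Fin (n + 1)) ℂ V := basisOfLinearIndependentOfCardEqFinrank hindep hcard
      with hbdef
    have hb : ⇑b = Fin.cons v u := coe_basisOfLinearIndependentOfCardEqFinrank _ _
    refine ⟨b, fun x hx j => ?_⟩
    refine Fin.cases ?_ ?_ j
    · have : x (b 0) = 0 := by rw [hb, Fin.cons_zero, hvB x hx]
      rw [this]
      exact zero_mem _
    · intro i
      set g : Module.End ℂ (V ⧸ W) := W.mapQ W x (hWle x hx) with hgdef
      have hg : g ∈ B' := ⟨x, hx, by ext w; simp [hgdef, Submodule.mapQ_apply]⟩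
      have hci := hc g hg i
      have h1 : W.mkQ (x (u i)) = g (c i) := by
        rw [← hu i, hgdef, Submodule.mkQ_apply, Submodule.mkQ_apply, Submodule.mapQ_apply]
      have himg : (c '' {k | k < i}) = W.mkQ '' (u '' {k | k < i}) := by
        rw [Set.image_image]
        exact Set.image_congr fun k _ => (hu k).symm
      have h2 : g (c i) ∈ Submodule.map W.mkQ (Submodule.span ℂ (u '' {k | k < i})) := by
        rw [Submodule.map_span, ← himg]
        exact hci
      obtain ⟨w, hw, hww⟩ := h2
      have h3 : x (u i) - w ∈ W := by
        rw [← Submodule.ker_mkQ W, LinearMap.mem_ker, map_sub, h1, hww, sub_self]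
      set T : Submodule ℂ V := Submodule.span ℂ (⇑b '' {i' | i' < Fin.succ i}) with hT
      have hsub1 : Submodule.span ℂ (u '' {k | k < i}) ≤ T := by
        rw [Submodule.span_le]
        rintro _ ⟨k, hk, rfl⟩
        apply Submodule.subset_span
        refine ⟨Fin.succ k, ?_, by rw [hb, Fin.cons_succ]⟩
        exact Fin.succ_lt_succ_iff.mpr hk
      have hsub2 : W ≤ T := by
        rw [hW, Submodule.span_le, Set.singleton_subset_iff]
        apply Submodule.subset_span
        exact ⟨0, Fin.succ_pos i, by rw [hb, Fin.cons_zero]⟩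
      have h4 : x (b (Fin.succ i)) = w + (x (u i) - w) := by
        rw [hb, Fin.cons_succ]
        abel
      rw [h4]
      exact T.add_mem (hsub1 hw) (hsub2 h3)


/-- Let `B ⊆ End(V)` be a (possibly non-unital) subalgebra of
endomorphisms of a finite-dimensional complex vector space `V` such that every
element of `B` has trace zero (in particular, since `B` is closed under
multiplication, all products of elements of `B` have trace zero).  Then every
element of `B` is nilpotent, and `B` is simultaneously strictly upper
triangularizable: there is a basis of `V` in which every element of `B` is a
strictly upper triangular matrix. -/
theorem trace_zero_nonunital_subalgebra_nilpotent_and_strictly_triangularizable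
    {V : Type*} [AddCommGroup V] [Module ℂ V] [FiniteDimensional ℂ V]
    (B : NonUnitalSubalgebra ℂ (Module.End ℂ V))
    (htr : ∀ x ∈ B, LinearMap.trace ℂ V x = 0) :
    (∀ x ∈ B, IsNilpotent x) ∧
    ∃ b : Basis (Fin (Module.finrank ℂ V)) ℂ V,
      ∀ x ∈ B, ∀ i j : Fin (Module.finrank ℂ V), j ≤ i →
        LinearMap.toMatrix b b x i j = 0 := by
  have hnil : ∀ x ∈ B, IsNilpotent x := by
    intro x hx
    apply aux_nilpotent_of_trace_pow
    intro k hk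
    apply htr
    have hpow : ∀ k : ℕ, 1 ≤ k → x ^ k ∈ B := by
      intro k hk
      induction k with
      | zero => omega
      | succ k ihk =>
        by_cases hk0 : k = 0
        · subst hk0; simpa using hx
        · rw [pow_succ]; exact mul_mem (ihk (by omega)) hx
    exact hpow k hk
  refine ⟨hnil, ?_⟩
  obtain ⟨b, hbp⟩ := aux_flag (finrank ℂ V) V rfl B hnil
  refine ⟨b, fun x hx i j hij => ?_⟩
  rw [LinearMap.toMatrix_apply]
  have hsp := hbp x hx j
  rw [Basis.mem_span_image] at hsp
  by_contra h0
  have hi : i ∈ (b.repr (x (b j))).support := Finsupp.mem_support_iff.mpr h0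
  exact absurd (hsp hi) (not_lt.mpr hij)
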